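/- Expansion of the logarithmic mean of the environment: Let (F'(1))_N be a sequence of positive random variables with ε_N = E[F'(1)] − 1 ≥ 0, ε_N → 0, ν_N = Var(F'(1)) = O(ε_N), and for some δ > 0: E[F'(1)^{−4−δ}] = O(1) and E[|F'(1) − E F'(1)|^{4+δ}] = O(ν_N^{2+δ/2}). Then E[log F'(1)] = ε_N − (1/2) ν_N + o(ε_N) as N → ∞. In particular, if ν_N/ε_N → ρ with ρ > 2, then E[log F'(1)] < 0 for all sufficiently large N. -/

import Mathlib

open MeasureTheory ProbabilityTheory Filter Asymptotics Topology

noncomputable section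

/-- The probability generating function of a mass function `f` on `ℕ`, evaluated at `s`:
`f(s) = ∑_z s^z f[z]`. -/
def pgfEval (f : ℕ → ℝ) (s : ℝ) : ℝ := ∑' z : ℕ, s ^ z * f z

/-- The mean `f'(1) = ∑_z z f[z]` of a mass function on `ℕ`. -/
def pgfMean (f : ℕ → ℝ) : ℝ := ∑' z : ℕ, (z : ℝ) * f z

/-- The second factorial moment `f''(1) = ∑_z z(z-1) f[z]`. -/
def pgfFact2 (f : ℕ → ℝ) : ℝ := ∑' z : ℕ, (z : ℝ) * ((z : ℝ) - 1) * f z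

/-- The `r`-th moment `∑_z z^r f[z]` of a mass function on `ℕ`. -/
def pgfMom (f : ℕ → ℝ) (r : ℕ) : ℝ := ∑' z : ℕ, (z : ℝ) ^ r * f z

/-- `f` is a probability mass function on `ℕ`. -/
def IsPMF (f : ℕ → ℝ) : Prop := (∀ z, 0 ≤ f z) ∧ Summable f ∧ ∑' z : ℕ, f z = 1

/-- The shape function `ψ` of a probability generating function `f` with mean `m`:
`ψ(s) = 1/(1-f(s)) - 1/(m(1-s))` for `s < 1`, extended by `ψ(1) = f''(1)/(2 f'(1)^2)`. -/
def shapeFun (f : ℕ → ℝ) (s : ℝ) : ℝ :=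
  if s < 1 then 1 / (1 - pgfEval f s) - 1 / (pgfMean f * (1 - s))
  else pgfFact2 f / (2 * (pgfMean f) ^ 2)

/-- Iterated composition of generating functions:
`compEval fs n s = fs 0 (fs 1 (⋯ (fs (n-1) s)⋯))`, `compEval fs 0 s = s`. -/
def compEval : (ℕ → ℕ → ℝ) → ℕ → ℝ → ℝ
  | _, 0, s => s
  | fs, n + 1, s => pgfEval (fs 0) (compEval (fun i => fs (i + 1)) n s)

/-- The density of the inverse gamma distribution with parameters `a, b`. -/
def invGammaPDF (a b x : ℝ) : ℝ :=
  if 0 < x then b ^ a / Real.Gamma a * x ^ (-a - 1) * Real.exp (-b / x) else 0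

/-- The inverse gamma distribution with parameters `a, b`, as a measure on `ℝ`. -/
def invGammaMeasure (a b : ℝ) : Measure ℝ :=
  MeasureTheory.volume.withDensity (fun x => ENNReal.ofReal (invGammaPDF a b x))

section AuxLemmas

lemma hasDerivAt_glog {x : ℝ} (hx : x ≠ 0) :
    HasDerivAt (fun y => Real.log y - ((y-1) - (y-1)^2/2)) (x⁻¹ + x - 2) x := by
  have h1 : HasDerivAt (fun y:ℝ => (y-1)) 1 x := (hasDerivAt_id x).sub_const 1
  have h2 : HasDerivAt (fun y:ℝ => (y-1)^2) (2*(x-1)) x := by simpa using h1.fun_pow 2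
  have h3 := (Real.hasDerivAt_log hx).fun_sub (h1.fun_sub (h2.div_const 2))
  rw [show x⁻¹ + x - 2 = x⁻¹ - (1 - 2*(x-1)/2) by ring]
  exact h3

lemma log_taylor_bound {x : ℝ} (hx : 1/2 ≤ x) :
    |Real.log x - ((x-1) - (x-1)^2/2)| ≤ 2*|x-1|^3 := by
  set g : ℝ → ℝ := fun y => Real.log y - ((y-1) - (y-1)^2/2) with hg
  have hg1 : g 1 = 0 := by simp [hg]
  rcases le_total 1 x with h1x | h1x
  · have key := norm_image_sub_le_of_norm_deriv_le_segment'
      (f := g) (f' := fun y => y⁻¹ + y - 2) (a := 1) (b := x) (C := 2*(x-1)^2)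
      (fun y hy => (hasDerivAt_glog (by linarith [hy.1] : (y:ℝ) ≠ 0)).hasDerivWithinAt)
      ?_ x (by constructor <;> linarith)
    · rw [hg1, sub_zero] at key
      have : |x - 1| = x - 1 := abs_of_nonneg (by linarith)
      calc |g x| ≤ 2*(x-1)^2 * (x - 1) := key
        _ = 2*|x-1|^3 := by rw [this]; ring
    · intro y hy
      have hy1 : (1:ℝ) ≤ y := hy.1
      have hyx : y ≤ x := le_of_lt hy.2
      have hy0 : (0:ℝ) < y := by linarith
      have he : y⁻¹ + y - 2 = (y-1)^2/y := by field_simp; ring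
      show |y⁻¹ + y - 2| ≤ 2*(x-1)^2
      rw [he, abs_of_nonneg (by positivity), div_le_iff₀ hy0]
      nlinarith [sq_nonneg (x-y), sq_nonneg (x-1), sq_nonneg (y-1)]
  · have key := norm_image_sub_le_of_norm_deriv_le_segment'
      (f := g) (f' := fun y => y⁻¹ + y - 2) (a := x) (b := 1) (C := 2*(x-1)^2)
      (fun y hy => (hasDerivAt_glog (by linarith [hy.1] : (y:ℝ) ≠ 0)).hasDerivWithinAt)
      ?_ 1 (by constructor <;> linarith)
    · rw [hg1, zero_sub, norm_neg] at key
      have : |x - 1| = 1 - x := by rw [abs_sub_comm]; exact abs_of_nonneg (by linarith)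
      calc |g x| ≤ 2*(x-1)^2 * (1 - x) := key
        _ = 2*|x-1|^3 := by rw [this]; ring
    · intro y hy
      have hy1 : x ≤ y := hy.1
      have hyx : y ≤ 1 := le_of_lt hy.2
      have hy0 : (0:ℝ) < y := by linarith
      have he : y⁻¹ + y - 2 = (y-1)^2/y := by field_simp; ring
      show |y⁻¹ + y - 2| ≤ 2*(x-1)^2
      rw [he, abs_of_nonneg (by positivity), div_le_iff₀ hy0]
      have hsq : (y-1)^2 ≤ (x-1)^2 := by nlinarith
      nlinarith

lemma log_taylor_master {δ c x : ℝ} (hδ : 0 ≤ δ) (hc : 1 ≤ c) (hx : 0 < x) :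
    |Real.log x - ((x-1) - (x-1)^2/2)| ≤ 2*|x-1|^3 + (5/2) * x⁻¹ * (2*|x-c|)^(3+δ) := by
  rcases le_or_gt (1/2) x with h | h
  · have h1 : |Real.log x - ((x-1) - (x-1)^2/2)| ≤ 2*|x-1|^3 := log_taylor_bound h
    have h2 : 0 ≤ (5/2) * x⁻¹ * (2*|x-c|)^(3+δ) := by positivity
    linarith
  · have h2 : (2:ℝ) ≤ x⁻¹ := by
      rw [show (2:ℝ) = (1/2 : ℝ)⁻¹ by norm_num]
      exact inv_anti₀ hx h.le
    have hb : |Real.log x - ((x-1) - (x-1)^2/2)| ≤ (5/2) * x⁻¹ := by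
      have hlog : |Real.log x| ≤ x⁻¹ - 1 := by
        rw [abs_of_nonpos (Real.log_nonpos hx.le (by linarith))]
        have h3 := Real.log_le_sub_one_of_pos (inv_pos.mpr hx)
        rw [Real.log_inv] at h3
        linarith
      have habs : |x - 1| ≤ 1 := by rw [abs_of_nonpos (by linarith)]; linarith
      have hsq : (x-1)^2 ≤ 1 := by nlinarith
      calc |Real.log x - ((x-1) - (x-1)^2/2)|
          ≤ |Real.log x| + |(x-1) - (x-1)^2/2| := abs_sub _ _
        _ ≤ |Real.log x| + (|x-1| + (x-1)^2/2) := by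
            have h4 : |(x-1)^2/2| = (x-1)^2/2 := abs_of_nonneg (by positivity)
            linarith [abs_sub (x-1) ((x-1)^2/2)]
        _ ≤ (x⁻¹ - 1) + (1 + 1/2) := by linarith
        _ ≤ (5/2) * x⁻¹ := by linarith
    have hbase : (1:ℝ) ≤ 2*|x-c| := by
      have : |x - c| = c - x := by rw [abs_sub_comm]; exact abs_of_nonneg (by linarith)
      rw [this]; linarith
    have hpow : (1:ℝ) ≤ (2*|x-c|)^(3+δ) := by
      calc (1:ℝ) = 1^(3+δ) := (Real.one_rpow _).symm
        _ ≤ (2*|x-c|)^(3+δ) := Real.rpow_le_rpow zero_le_one hbase (by linarith)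
    have hx1 : 0 < x⁻¹ := inv_pos.mpr hx
    have h5 : (5/2) * x⁻¹ ≤ (5/2) * x⁻¹ * (2*|x-c|)^(3+δ) :=
      le_mul_of_one_le_right (by positivity) hpow
    have h6 : 0 ≤ 2*|x-1|^3 := by positivity
    linarith

lemma cube_le {y t δ : ℝ} (hy : 0 ≤ y) (ht : 0 < t) (hδ : 0 ≤ δ) :
    y^3 ≤ t^(-(1+δ)) * y^(4+δ) + t^3 := by
  rcases le_total y t with h | h
  · have h1 : y^3 ≤ t^3 := pow_le_pow_left₀ hy h 3
    have h2 : 0 ≤ t^(-(1+δ)) * y^(4+δ) := by positivity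
    linarith
  · have hy0 : 0 < y := lt_of_lt_of_le ht h
    have h1 : (1:ℝ) ≤ (y/t)^(1+δ) := by
      calc (1:ℝ) = 1^(1+δ) := (Real.one_rpow _).symm
        _ ≤ (y/t)^(1+δ) := Real.rpow_le_rpow zero_le_one ((one_le_div ht).mpr h) (by linarith)
    have h2 : t^(-(1+δ)) * y^(4+δ) = (y/t)^(1+δ) * y^(3:ℝ) := by
      rw [Real.rpow_neg ht.le, Real.div_rpow hy ht.le,
        show (4+δ) = (1+δ)+3 by ring, Real.rpow_add hy0]
      field_simp
    have h3 : y^((3:ℕ):ℝ) = y^(3:ℕ) := Real.rpow_natCast y 3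
    have h4 : y^(3:ℕ) ≤ (y/t)^(1+δ) * y^(3:ℝ) := by
      rw [show ((3:ℝ)) = ((3:ℕ):ℝ) by norm_num, h3]
      nlinarith [pow_nonneg hy 3]
    have h5 : 0 ≤ t^3 := by positivity
    calc y^3 ≤ (y/t)^(1+δ) * y^(3:ℝ) := h4
      _ ≤ t^(-(1+δ)) * y^(4+δ) + t^3 := by rw [← h2]; linarith

lemma inv_mul_young {x w s δ : ℝ} (hx : 0 < x) (hw : 0 ≤ w) (hs : 0 < s) (hδ : 0 ≤ δ) :
    x⁻¹ * w^(3+δ) ≤ s^(4+δ) * x^(-(4+δ)) + s^(-((4+δ)/(3+δ))) * w^(4+δ) := by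
  have h3δ : (0:ℝ) < 3+δ := by linarith
  have h4δ : (0:ℝ) < 4+δ := by linarith
  have hconj : Real.HolderConjugate (4+δ) ((4+δ)/(3+δ)) := by
    rw [Real.holderConjugate_iff]
    constructor
    · linarith
    · field_simp
      ring
  have hy := Real.young_inequality (x⁻¹*s) (w^(3+δ)/s) hconj
  have hinv : 0 < x⁻¹ := inv_pos.mpr hx
  have hwp : 0 ≤ w^(3+δ) := Real.rpow_nonneg hw _
  have e0 : (x⁻¹*s) * (w^(3+δ)/s) = x⁻¹ * w^(3+δ) := by field_simp
  have e1 : |x⁻¹*s| ^ (4+δ) = s^(4+δ) * x^(-(4+δ)) := by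
    rw [abs_of_nonneg (by positivity), Real.mul_rpow hinv.le hs.le, Real.inv_rpow hx.le,
      ← Real.rpow_neg hx.le]
    ring
  have e2 : |w^(3+δ)/s| ^ ((4+δ)/(3+δ)) = s^(-((4+δ)/(3+δ))) * w^(4+δ) := by
    rw [abs_of_nonneg (by positivity), Real.div_rpow hwp hs.le,
      ← Real.rpow_mul hw, show (3+δ)*((4+δ)/(3+δ)) = 4+δ by field_simp,
      Real.rpow_neg hs.le]
    ring
  rw [e0, e1, e2] at hy
  have d1 : s^(4+δ) * x^(-(4+δ)) / (4+δ) ≤ s^(4+δ) * x^(-(4+δ)) :=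
    div_le_self (by positivity) (by linarith)
  have d2 : s^(-((4+δ)/(3+δ))) * w^(4+δ) / ((4+δ)/(3+δ)) ≤ s^(-((4+δ)/(3+δ))) * w^(4+δ) := by
    apply div_le_self (by positivity)
    rw [le_div_iff₀ h3δ]; linarith
  linarith

lemma master_pointwise {δ c t s x : ℝ} (hδ : 0 ≤ δ) (hc : 1 ≤ c) (ht : 0 < t) (hs : 0 < s)
    (hx : 0 < x) :
    |Real.log x - ((x-1) - (x-1)^2/2)| ≤
      (16*t^(-(1+δ)) + (5/2)*2^(3+δ)*s^(-((4+δ)/(3+δ)))) * |x-c|^(4+δ)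
      + (5/2)*2^(3+δ)*s^(4+δ) * x^(-(4+δ)) + (16*t^3 + 16*(c-1)^3) := by
  have K0 : (0:ℝ) < (5/2)*2^(3+δ) := by positivity
  have h1 := log_taylor_master hδ hc hx
  have h2 : (2*|x-c|)^(3+δ) = 2^(3+δ) * |x-c|^(3+δ) :=
    Real.mul_rpow (by norm_num) (abs_nonneg _)
  have h3 : x⁻¹ * |x-c|^(3+δ) ≤ s^(4+δ) * x^(-(4+δ)) + s^(-((4+δ)/(3+δ))) * |x-c|^(4+δ) :=
    inv_mul_young hx (abs_nonneg _) hs hδ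
  have h4 : |x-1| ≤ |x-c| + (c-1) := by
    have he : x - 1 = (x - c) + (c - 1) := by ring
    rw [he]
    refine (abs_add_le _ _).trans ?_
    rw [abs_of_nonneg (by linarith : (0:ℝ) ≤ c-1)]
  have h6 : |x-1|^3 ≤ 8*(|x-c|^3 + (c-1)^3) := by
    have ha : (0:ℝ) ≤ |x-c| := abs_nonneg _
    have hb : (0:ℝ) ≤ c-1 := by linarith
    have := pow_le_pow_left₀ (abs_nonneg (x-1)) h4 3
    nlinarith [abs_nonneg (x-1), sq_nonneg (|x-c| - (c-1)), mul_nonneg ha hb]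
  have h7 : |x-c|^3 ≤ t^(-(1+δ)) * |x-c|^(4+δ) + t^3 := cube_le (abs_nonneg _) ht hδ
  have h8 : (5/2) * x⁻¹ * (2*|x-c|)^(3+δ)
      ≤ (5/2)*2^(3+δ) * (s^(4+δ) * x^(-(4+δ)) + s^(-((4+δ)/(3+δ))) * |x-c|^(4+δ)) := by
    rw [h2]
    calc (5/2) * x⁻¹ * (2^(3+δ) * |x-c|^(3+δ)) = (5/2)*2^(3+δ) * (x⁻¹ * |x-c|^(3+δ)) := by ring
      _ ≤ _ := by
          apply mul_le_mul_of_nonneg_left h3 (le_of_lt K0)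
  have h9 : 2*|x-1|^3 ≤ 16*(t^(-(1+δ)) * |x-c|^(4+δ) + t^3) + 16*(c-1)^3 := by nlinarith
  calc |Real.log x - ((x-1) - (x-1)^2/2)| ≤ 2*|x-1|^3 + (5/2) * x⁻¹ * (2*|x-c|)^(3+δ) := h1
    _ ≤ (16*(t^(-(1+δ)) * |x-c|^(4+δ) + t^3) + 16*(c-1)^3)
        + (5/2)*2^(3+δ) * (s^(4+δ) * x^(-(4+δ)) + s^(-((4+δ)/(3+δ))) * |x-c|^(4+δ)) := by
        linarith
    _ = _ := by ring

lemma rpow_isLittleO {w ε : ℕ → ℝ} (hw : ∀ N, 0 ≤ w N) (hε0 : ∀ N, 0 ≤ ε N)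
    (hO : w =O[atTop] ε) (hlim : Tendsto ε atTop (𝓝 0)) {p : ℝ} (hp : 1 < p) :
    (fun N => w N ^ p) =o[atTop] ε := by
  obtain ⟨C, hC, hev⟩ := hO.exists_pos
  rw [Asymptotics.isLittleO_iff]
  intro c hc
  have hp1 : (0:ℝ) < p - 1 := by linarith
  set r : ℝ := (c / C^p) ^ (p-1)⁻¹ with hr
  have hrpos : (0:ℝ) < r := by positivity
  filter_upwards [hev.bound, hlim.eventually_lt_const hrpos] with N h1 h2
  have hwε : w N ≤ C * ε N := by
    rw [Real.norm_eq_abs, Real.norm_eq_abs, abs_of_nonneg (hw N), abs_of_nonneg (hε0 N)] at h1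
    exact h1
  have h3 : w N ^ p ≤ (C * ε N) ^ p := Real.rpow_le_rpow (hw N) hwε (by linarith)
  have h4 : (C * ε N) ^ p = C^p * (ε N ^ (p-1) * ε N) := by
    rw [Real.mul_rpow hC.le (hε0 N), show p = (p-1) + 1 by ring,
      Real.rpow_add' (hε0 N) (ne_of_gt (by linarith : (0:ℝ) < p - 1 + 1)), Real.rpow_one]
    ring
  have h5 : ε N ^ (p-1) ≤ c / C^p := by
    have := Real.rpow_le_rpow (hε0 N) h2.le hp1.le
    rwa [hr, ← Real.rpow_mul (by positivity) , inv_mul_cancel₀ (ne_of_gt hp1),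
      Real.rpow_one] at this
  have h6 : C^p * (ε N ^ (p-1) * ε N) ≤ C^p * ((c / C^p) * ε N) := by
    apply mul_le_mul_of_nonneg_left (mul_le_mul_of_nonneg_right h5 (hε0 N)) (by positivity)
  have h7 : C^p * ((c / C^p) * ε N) = c * ε N := by
    field_simp
  rw [Real.norm_eq_abs, Real.norm_eq_abs, abs_of_nonneg (Real.rpow_nonneg (hw N) p),
    abs_of_nonneg (hε0 N)]
  linarith

lemma abs_log_le {x δ : ℝ} (hδ : 0 ≤ δ) (hx : 0 < x) :
    |Real.log x| ≤ |x-1| + x^(-(4+δ)) + 1 := by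
  have hrp : 0 ≤ x^(-(4+δ)) := Real.rpow_nonneg hx.le _
  rcases le_total 1 x with h | h
  · rw [abs_of_nonneg (Real.log_nonneg h), abs_of_nonneg (by linarith : (0:ℝ) ≤ x - 1)]
    have := Real.log_le_sub_one_of_pos hx
    linarith
  · rw [abs_of_nonpos (Real.log_nonpos hx.le h)]
    have h1 := Real.log_le_sub_one_of_pos (inv_pos.mpr hx)
    rw [Real.log_inv] at h1
    have h2 : x⁻¹ = x^(-1:ℝ) := (Real.rpow_neg_one x).symm
    have h3 : x^(-1:ℝ) ≤ x^(-(4+δ)) := Real.rpow_le_rpow_of_exponent_ge hx h (by linarith)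
    have h4 : 0 ≤ |x-1| := abs_nonneg _
    have : -Real.log x ≤ x⁻¹ - 1 := by linarith
    rw [h2] at this
    linarith

lemma rpow_combine {ν A C e1 e3 : ℝ} {e2 : ℝ} (hν : 0 < ν)
    (hC : A ≤ C * ν ^ e2) (he : e1 + e2 = e3) : ν ^ e1 * A ≤ C * ν ^ e3 := by
  have h := mul_le_mul_of_nonneg_left hC (Real.rpow_nonneg hν.le e1)
  calc ν^e1 * A ≤ ν^e1 * (C * ν^e2) := h
    _ = C * ν^(e1+e2) := by rw [Real.rpow_add hν]; ring
    _ = C * ν^e3 := by rw [he]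

end AuxLemmas

set_option maxHeartbeats 1000000 in
/-- **Expansion of the logarithmic mean of the environment** (from the proof of
Theorem 1 iii)): under the moment assumptions on `F'(1)` with `ε_N ≥ 0`, `ε_N → 0` and
`ν_N = O(ε_N)`: `E[log F'(1)] = ε_N - ν_N/2 + o(ε_N)`.  In particular, if
`ν_N / ε_N → ρ` with `ρ > 2`, then `E[log F'(1)] < 0` for all sufficiently large
`N`. -/



theorem log_mean_expansion
    {Ω : Type} [MeasurableSpace Ω]
    -- for each `N`, a probability space carrying the random mean `M = F'(1)`
    (μ : ℕ → Measure Ω) (hprob : ∀ N, IsProbabilityMeasure (μ N))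
    (M : ℕ → Ω → ℝ)
    (hMmeas : ∀ N, Measurable (M N))
    (hMpos : ∀ N, ∀ᵐ ω ∂ μ N, 0 < M N ω)
    -- `ε_N = E[F'(1)] - 1`, `ν_N = Var(F'(1))`
    (ε ν : ℕ → ℝ)
    (hMint : ∀ N, Integrable (M N) (μ N)) (hML2 : ∀ N, MemLp (M N) 2 (μ N))
    (hεdef : ∀ N, ε N = (∫ ω, M N ω ∂ μ N) - 1)
    (hνdef : ∀ N, ν N = variance (M N) (μ N))
    (hε0 : ∀ N, 0 ≤ ε N) (hεlim : Tendsto ε atTop (𝓝 0))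
    (hνO : ν =O[atTop] ε)
    -- moment assumptions: for some `δ > 0`, `E[F'(1)^{-4-δ}] = O(1)` and
    -- `E[|F'(1) - E F'(1)|^{4+δ}] = O(ν_N^{2+δ/2})`
    (hmom : ∃ δ > (0 : ℝ),
      (∀ N, Integrable (fun ω => M N ω ^ (-(4 + δ))) (μ N)) ∧
      ((fun N => ∫ ω, M N ω ^ (-(4 + δ)) ∂ μ N) =O[atTop] (fun _ => (1 : ℝ))) ∧
      (∀ N, Integrable (fun ω => |M N ω - ∫ ω', M N ω' ∂ μ N| ^ (4 + δ)) (μ N)) ∧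
      ((fun N => ∫ ω, |M N ω - ∫ ω', M N ω' ∂ μ N| ^ (4 + δ) ∂ μ N)
        =O[atTop] (fun N => ν N ^ (2 + δ / 2))))
    : ((fun N => (∫ ω, Real.log (M N ω) ∂ μ N) - (ε N - ν N / 2)) =o[atTop] ε) ∧
      (∀ ρ : ℝ, 2 < ρ → Tendsto (fun N => ν N / ε N) atTop (𝓝 ρ) →
        ∀ᶠ N in atTop, (∫ ω, Real.log (M N ω) ∂ μ N) < 0) := by
  obtain ⟨δ, hδpos, hint4, hBO, hintA, hAO⟩ := hmom
  have hδ : (0:ℝ) ≤ δ := hδpos.le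
  have hν0 : ∀ N, 0 ≤ ν N := fun N => by rw [hνdef N]; exact variance_nonneg _ _
  -- integrability facts
  have intM1 : ∀ N, Integrable (fun ω => M N ω - 1) (μ N) :=
    fun N => (hMint N).sub (integrable_const 1)
  have intsq : ∀ N, Integrable (fun ω => (M N ω - 1)^2) (μ N) := by
    intro N
    have h := ((hML2 N).sub (memLp_const 1)).integrable_sq
    simpa [Pi.sub_apply] using h
  have intlog : ∀ N, Integrable (fun ω => Real.log (M N ω)) (μ N) := by
    intro N
    haveI := hprob N
    apply Integrable.mono' (g := fun ω => |M N ω - 1| + M N ω ^ (-(4+δ)) + 1)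
      (((intM1 N).abs.add (hint4 N)).add (integrable_const 1))
      ((Real.measurable_log.comp (hMmeas N)).aestronglyMeasurable)
    filter_upwards [hMpos N] with ω hω
    rw [Real.norm_eq_abs]
    exact abs_log_le hδ hω
  have intpoly : ∀ N, Integrable (fun ω => (M N ω - 1) - (M N ω - 1)^2/2) (μ N) :=
    fun N => (intM1 N).sub ((intsq N).div_const 2)
  have intg : ∀ N, Integrable
      (fun ω => Real.log (M N ω) - ((M N ω - 1) - (M N ω - 1)^2/2)) (μ N) :=
    fun N => (intlog N).sub (intpoly N)
  -- key identity
  have key : ∀ N, (∫ ω, Real.log (M N ω) ∂ μ N) - (ε N - ν N / 2)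
      = (∫ ω, (Real.log (M N ω) - ((M N ω - 1) - (M N ω - 1)^2/2)) ∂ μ N) - ε N^2/2 := by
    intro N
    haveI := hprob N
    have hsplit := integral_sub (intlog N) (intpoly N)
    have hI1 : ∫ ω, (M N ω - 1) ∂ μ N = ε N := by
      rw [integral_sub (hMint N) (integrable_const 1), integral_const]
      simp [hεdef N]
    have hI2 : ∫ ω, (M N ω - 1)^2 ∂ μ N = ν N + ε N^2 := by
      have hvar := variance_eq_sub (hML2 N)
      simp only [Pi.pow_apply] at hvar
      have intM2 : Integrable (fun ω => (M N ω)^2) (μ N) := (hML2 N).integrable_sq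
      have e : (fun ω => (M N ω - 1)^2) = fun ω => (M N ω)^2 - (2*(M N ω) - 1) := by
        funext ω; ring
      have i2' : Integrable (fun ω => 2 * M N ω) (μ N) := (hMint N).const_mul 2
      have i2 : Integrable (fun ω => 2 * M N ω - 1) (μ N) := i2'.sub (integrable_const 1)
      rw [e, integral_sub intM2 i2, integral_sub i2' (integrable_const 1), integral_const_mul,
        integral_const]
      simp only [measure_univ, probReal_univ, ENNReal.toReal_one, smul_eq_mul, one_mul]
      rw [hνdef N, hvar, hεdef N]
      ring
    have hpoly : ∫ ω, ((M N ω - 1) - (M N ω - 1)^2/2) ∂ μ N = ε N - (ν N + ε N^2)/2 := by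
      rw [integral_sub (intM1 N) ((intsq N).div_const 2), integral_div, hI1, hI2]
    rw [hsplit, hpoly]
    ring
  -- constants from the O-assumptions
  obtain ⟨CA, hCA, hevA⟩ := hAO.exists_pos
  obtain ⟨CB, hCB, hevB⟩ := hBO.exists_pos
  set K : ℝ := (5/2)*2^(3+δ) with hK
  have hK0 : 0 < K := by rw [hK]; positivity
  set Bnd : ℕ → ℝ := fun N => (1/2) * ε N^(2:ℝ) + 16 * ε N^(3:ℝ)
    + (16*CA + 16) * ν N ^((3:ℝ)/2) + (K*CA + K*CB) * ν N ^((3+δ)/2) with hBnddef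
  -- the main eventual bound
  have hBnd : ∀ᶠ N in atTop,
      |(∫ ω, Real.log (M N ω) ∂ μ N) - (ε N - ν N / 2)| ≤ Bnd N := by
    filter_upwards [hevA.bound, hevB.bound] with N hA hB
    haveI := hprob N
    have hc1 : 1 ≤ ∫ ω, M N ω ∂ μ N := by have := hεdef N; have := hε0 N; linarith
    have hc0 : 0 < ∫ ω, M N ω ∂ μ N := by linarith
    have hAle : (∫ ω, |M N ω - ∫ ω', M N ω' ∂ μ N| ^ (4+δ) ∂ μ N)
        ≤ CA * ν N ^(2+δ/2) := by
      rw [Real.norm_eq_abs, Real.norm_eq_abs,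
        abs_of_nonneg (Real.rpow_nonneg (hν0 N) _)] at hA
      exact (le_abs_self _).trans hA
    have hBle : (∫ ω, M N ω ^ (-(4+δ)) ∂ μ N) ≤ CB := by
      rw [Real.norm_eq_abs, Real.norm_eq_abs] at hB
      simpa using (le_abs_self _).trans hB
    have hε2 : ε N^2 = ε N^(2:ℝ) := by
      rw [show ((2:ℝ)) = ((2:ℕ):ℝ) by norm_num, Real.rpow_natCast]
    have hε3 : ε N^3 = ε N^(3:ℝ) := by
      rw [show ((3:ℝ)) = ((3:ℕ):ℝ) by norm_num, Real.rpow_natCast]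
    have habs : ∀ G : ℝ, |G - ε N^2/2| ≤ |G| + ε N^2/2 := by
      intro G
      have := abs_sub G (ε N^2/2)
      have h0 : |ε N^2/2| = ε N^2/2 := abs_of_nonneg (by positivity)
      linarith
    have hcε : (∫ ω, M N ω ∂ μ N) - 1 = ε N := (hεdef N).symm
    have hGle : |∫ ω, (Real.log (M N ω) - ((M N ω - 1) - (M N ω - 1)^2/2)) ∂ μ N|
        ≤ ∫ ω, |Real.log (M N ω) - ((M N ω - 1) - (M N ω - 1)^2/2)| ∂ μ N := by
      have := norm_integral_le_integral_norm
        (fun ω => Real.log (M N ω) - ((M N ω - 1) - (M N ω - 1)^2/2)) (μ := μ N)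
      simp only [Real.norm_eq_abs] at this
      exact this
    rcases eq_or_lt_of_le (hν0 N) with hνz | hνp
    · -- variance zero: M is a.e. constant
      have hAzero : (∫ ω, |M N ω - ∫ ω', M N ω' ∂ μ N| ^ (4+δ) ∂ μ N) = 0 := by
        have h1 : CA * ν N ^(2+δ/2) = 0 := by
          rw [← hνz, Real.zero_rpow (by positivity : (2:ℝ)+δ/2 ≠ 0), mul_zero]
        have h2 : 0 ≤ ∫ ω, |M N ω - ∫ ω', M N ω' ∂ μ N| ^ (4+δ) ∂ μ N :=
          integral_nonneg (fun ω => Real.rpow_nonneg (abs_nonneg _) _)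
        linarith [hAle]
      have hae : ∀ᵐ ω ∂ μ N, M N ω = ∫ ω', M N ω' ∂ μ N := by
        have h0 := (integral_eq_zero_iff_of_nonneg
          (fun ω => Real.rpow_nonneg (abs_nonneg _) _) (hintA N)).mp hAzero
        filter_upwards [h0] with ω hω
        have h1 : |M N ω - ∫ ω', M N ω' ∂ μ N| = 0 := by
          have := (Real.rpow_eq_zero (abs_nonneg _)
            (by positivity : (4:ℝ)+δ ≠ 0)).mp hω
          exact this
        have := abs_eq_zero.mp h1
        linarith
      have hgc : ∫ ω, |Real.log (M N ω) - ((M N ω - 1) - (M N ω - 1)^2/2)| ∂ μ N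
          ≤ 2 * ε N^3 := by
        have hcongr : (fun ω => |Real.log (M N ω) - ((M N ω - 1) - (M N ω - 1)^2/2)|)
            =ᵐ[μ N] fun _ => |Real.log (∫ ω', M N ω' ∂ μ N)
              - (((∫ ω', M N ω' ∂ μ N) - 1) - ((∫ ω', M N ω' ∂ μ N) - 1)^2/2)| := by
          filter_upwards [hae] with ω hω
          rw [hω]
        rw [integral_congr_ae hcongr, integral_const]
        simp only [measure_univ, probReal_univ, ENNReal.toReal_one, smul_eq_mul, one_mul]
        have hm := log_taylor_master (c := ∫ ω', M N ω' ∂ μ N) hδ hc1 hc0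
        rw [sub_self, abs_zero, mul_zero,
          Real.zero_rpow (by positivity : (3:ℝ)+δ ≠ 0), mul_zero, add_zero] at hm
        have he1 : |(∫ ω', M N ω' ∂ μ N) - 1| = ε N := by
          rw [hcε]; exact abs_of_nonneg (hε0 N)
        rw [he1] at hm
        linarith
      have b1 : 0 ≤ (16*CA + 16) * ν N ^((3:ℝ)/2) := by
        have := Real.rpow_nonneg (hν0 N) ((3:ℝ)/2); positivity
      have b2 : 0 ≤ (K*CA + K*CB) * ν N ^((3+δ)/2) := by
        have := Real.rpow_nonneg (hν0 N) ((3+δ)/2); positivity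
      rw [key N]
      calc |(∫ ω, (Real.log (M N ω) - ((M N ω - 1) - (M N ω - 1)^2/2)) ∂ μ N) - ε N^2/2|
          ≤ |∫ ω, (Real.log (M N ω) - ((M N ω - 1) - (M N ω - 1)^2/2)) ∂ μ N| + ε N^2/2 :=
            habs _
        _ ≤ 2 * ε N^3 + ε N^2/2 := by linarith [hGle.trans hgc]
        _ ≤ Bnd N := by
            show _ ≤ (1/2) * ε N^(2:ℝ) + 16 * ε N^(3:ℝ)
              + (16*CA + 16) * ν N ^((3:ℝ)/2) + (K*CA + K*CB) * ν N ^((3+δ)/2)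
            rw [← hε2, ← hε3]
            linarith [b1, b2, pow_nonneg (hε0 N) 3]
    · -- positive variance
      set t : ℝ := ν N ^ ((1:ℝ)/2) with htdef
      set s : ℝ := ν N ^ ((3+δ)/(2*(4+δ))) with hsdef
      have ht0 : 0 < t := Real.rpow_pos_of_pos hνp _
      have hs0 : 0 < s := Real.rpow_pos_of_pos hνp _
      set a : ℝ := 16*t^(-(1+δ)) + K*s^(-((4+δ)/(3+δ))) with hadef
      set b : ℝ := K*s^(4+δ) with hbdef
      have ha0 : 0 ≤ a := by
        rw [hadef]
        have := Real.rpow_nonneg ht0.le (-(1+δ))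
        have := Real.rpow_nonneg hs0.le (-((4+δ)/(3+δ)))
        nlinarith
      have hb0 : 0 ≤ b := by
        rw [hbdef]; have := Real.rpow_nonneg hs0.le (4+δ); nlinarith
      have hmaster : ∀ᵐ ω ∂ μ N,
          |Real.log (M N ω) - ((M N ω - 1) - (M N ω - 1)^2/2)|
          ≤ a * |M N ω - ∫ ω', M N ω' ∂ μ N|^(4+δ)
            + b * (M N ω)^(-(4+δ)) + (16*t^3 + 16*((∫ ω', M N ω' ∂ μ N)-1)^3) := by
        filter_upwards [hMpos N] with ω hω
        have := master_pointwise (c := ∫ ω', M N ω' ∂ μ N) (t := t) (s := s)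
          hδ hc1 ht0 hs0 hω
        calc |Real.log (M N ω) - ((M N ω - 1) - (M N ω - 1)^2/2)|
            ≤ (16*t^(-(1+δ)) + (5/2)*2^(3+δ)*s^(-((4+δ)/(3+δ))))
                * |M N ω - ∫ ω', M N ω' ∂ μ N|^(4+δ)
              + (5/2)*2^(3+δ)*s^(4+δ) * (M N ω)^(-(4+δ))
              + (16*t^3 + 16*((∫ ω', M N ω' ∂ μ N)-1)^3) := this
          _ = _ := by rw [hadef, hbdef, hK]; try ring
      have iA : Integrable (fun ω => a * |M N ω - ∫ ω', M N ω' ∂ μ N|^(4+δ)) (μ N) :=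
        (hintA N).const_mul a
      have iB : Integrable (fun ω => b * (M N ω)^(-(4+δ))) (μ N) := (hint4 N).const_mul b
      have iAB : Integrable (fun ω => a * |M N ω - ∫ ω', M N ω' ∂ μ N|^(4+δ)
          + b * (M N ω)^(-(4+δ))) (μ N) := iA.add iB
      have hint_rhs : Integrable (fun ω =>
          a * |M N ω - ∫ ω', M N ω' ∂ μ N|^(4+δ)
            + b * (M N ω)^(-(4+δ)) + (16*t^3 + 16*((∫ ω', M N ω' ∂ μ N)-1)^3)) (μ N) :=
        iAB.add (integrable_const _)
      have hmono : ∫ ω, |Real.log (M N ω) - ((M N ω - 1) - (M N ω - 1)^2/2)| ∂ μ N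
          ≤ ∫ ω, (a * |M N ω - ∫ ω', M N ω' ∂ μ N|^(4+δ)
            + b * (M N ω)^(-(4+δ)) + (16*t^3 + 16*((∫ ω', M N ω' ∂ μ N)-1)^3)) ∂ μ N :=
        integral_mono_ae (intg N).abs hint_rhs hmaster
      have hcomp : ∫ ω, (a * |M N ω - ∫ ω', M N ω' ∂ μ N|^(4+δ)
            + b * (M N ω)^(-(4+δ)) + (16*t^3 + 16*((∫ ω', M N ω' ∂ μ N)-1)^3)) ∂ μ N
          = a * (∫ ω, |M N ω - ∫ ω', M N ω' ∂ μ N|^(4+δ) ∂ μ N)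
            + b * (∫ ω, (M N ω)^(-(4+δ)) ∂ μ N)
            + (16*t^3 + 16*((∫ ω', M N ω' ∂ μ N)-1)^3) := by
        rw [integral_add iAB (integrable_const _), integral_add iA iB,
          integral_const_mul, integral_const_mul, integral_const]
        simp [measure_univ]
      -- rpow algebra
      have et1 : t^(-(1+δ)) = ν N ^ ((1/2) * (-(1+δ))) := by
        rw [htdef, ← Real.rpow_mul (hν0 N)]
      have es1 : s^(-((4+δ)/(3+δ))) = ν N ^ (((3+δ)/(2*(4+δ))) * (-((4+δ)/(3+δ)))) := by
        rw [hsdef, ← Real.rpow_mul (hν0 N)]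
      have es2 : s^(4+δ) = ν N ^ ((3+δ)/2) := by
        rw [hsdef, ← Real.rpow_mul (hν0 N)]
        congr 1
        field_simp
      have et3 : t^3 = ν N ^ ((3:ℝ)/2) := by
        rw [htdef, ← Real.rpow_natCast (ν N ^ ((1:ℝ)/2)) 3, ← Real.rpow_mul (hν0 N)]
        norm_num
      have hterm1 : t^(-(1+δ)) * (∫ ω, |M N ω - ∫ ω', M N ω' ∂ μ N|^(4+δ) ∂ μ N)
          ≤ CA * ν N ^ ((3:ℝ)/2) := by
        rw [et1]
        exact rpow_combine hνp hAle (by ring)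
      have hterm2 : s^(-((4+δ)/(3+δ))) * (∫ ω, |M N ω - ∫ ω', M N ω' ∂ μ N|^(4+δ) ∂ μ N)
          ≤ CA * ν N ^ ((3+δ)/2) := by
        rw [es1]
        apply rpow_combine hνp hAle
        field_simp
        ring
      have hterm3 : b * (∫ ω, (M N ω)^(-(4+δ)) ∂ μ N) ≤ K * CB * ν N ^ ((3+δ)/2) := by
        rw [hbdef, es2]
        have hBpos : 0 ≤ ν N ^ ((3+δ)/2) := Real.rpow_nonneg (hν0 N) _
        calc K * ν N ^ ((3+δ)/2) * (∫ ω, (M N ω)^(-(4+δ)) ∂ μ N)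
            ≤ K * ν N ^ ((3+δ)/2) * CB := by
              apply mul_le_mul_of_nonneg_left hBle (by positivity)
          _ = K * CB * ν N ^ ((3+δ)/2) := by ring
      have hA0 : 0 ≤ ∫ ω, |M N ω - ∫ ω', M N ω' ∂ μ N|^(4+δ) ∂ μ N :=
        integral_nonneg (fun ω => Real.rpow_nonneg (abs_nonneg _) _)
      have haA : a * (∫ ω, |M N ω - ∫ ω', M N ω' ∂ μ N|^(4+δ) ∂ μ N)
          ≤ 16 * CA * ν N ^ ((3:ℝ)/2) + K * CA * ν N ^ ((3+δ)/2) := by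
        rw [hadef, add_mul]
        have g1 : 16*t^(-(1+δ)) * (∫ ω, |M N ω - ∫ ω', M N ω' ∂ μ N|^(4+δ) ∂ μ N)
            ≤ 16 * (CA * ν N ^ ((3:ℝ)/2)) := by
          rw [mul_assoc]
          exact mul_le_mul_of_nonneg_left hterm1 (by norm_num)
        have g2 : K*s^(-((4+δ)/(3+δ))) * (∫ ω, |M N ω - ∫ ω', M N ω' ∂ μ N|^(4+δ) ∂ μ N)
            ≤ K * (CA * ν N ^ ((3+δ)/2)) := by
          rw [mul_assoc]
          exact mul_le_mul_of_nonneg_left hterm2 hK0.le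
        calc 16*t^(-(1+δ)) * (∫ ω, |M N ω - ∫ ω', M N ω' ∂ μ N|^(4+δ) ∂ μ N)
              + K*s^(-((4+δ)/(3+δ))) * (∫ ω, |M N ω - ∫ ω', M N ω' ∂ μ N|^(4+δ) ∂ μ N)
            ≤ 16 * (CA * ν N ^ ((3:ℝ)/2)) + K * (CA * ν N ^ ((3+δ)/2)) := by linarith
          _ = _ := by ring
      have hccube : ((∫ ω', M N ω' ∂ μ N)-1)^3 = ε N ^(3:ℝ) := by
        rw [hcε, ← hε3]
      rw [key N]
      have hchain : ∫ ω, |Real.log (M N ω) - ((M N ω - 1) - (M N ω - 1)^2/2)| ∂ μ N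
          ≤ 16 * CA * ν N ^ ((3:ℝ)/2) + K * CA * ν N ^ ((3+δ)/2) + K * CB * ν N ^ ((3+δ)/2)
            + 16 * ν N ^ ((3:ℝ)/2) + 16 * ε N ^(3:ℝ) := by
        have := hmono.trans (le_of_eq hcomp)
        rw [hccube] at this
        rw [et3] at this
        linarith
      calc |(∫ ω, (Real.log (M N ω) - ((M N ω - 1) - (M N ω - 1)^2/2)) ∂ μ N) - ε N^2/2|
          ≤ |∫ ω, (Real.log (M N ω) - ((M N ω - 1) - (M N ω - 1)^2/2)) ∂ μ N| + ε N^2/2 :=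
            habs _
        _ ≤ (16 * CA * ν N ^ ((3:ℝ)/2) + K * CA * ν N ^ ((3+δ)/2) + K * CB * ν N ^ ((3+δ)/2)
            + 16 * ν N ^ ((3:ℝ)/2) + 16 * ε N ^(3:ℝ)) + ε N^2/2 := by
            linarith [hGle.trans hchain]
        _ ≤ Bnd N := by
            show _ ≤ (1/2) * ε N^(2:ℝ) + 16 * ε N^(3:ℝ)
              + (16*CA + 16) * ν N ^((3:ℝ)/2) + (K*CA + K*CB) * ν N ^((3+δ)/2)
            rw [← hε2, ← hε3]
            linarith
  -- Bnd is little-o of ε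
  have hBndo : Bnd =o[atTop] ε := by
    have l1 : (fun N => ε N ^(2:ℝ)) =o[atTop] ε :=
      rpow_isLittleO hε0 hε0 (isBigO_refl _ _) hεlim one_lt_two
    have l2 : (fun N => ε N ^(3:ℝ)) =o[atTop] ε :=
      rpow_isLittleO hε0 hε0 (isBigO_refl _ _) hεlim (by norm_num)
    have l3 : (fun N => ν N ^((3:ℝ)/2)) =o[atTop] ε :=
      rpow_isLittleO hν0 hε0 hνO hεlim (by norm_num)
    have l4 : (fun N => ν N ^((3+δ)/2)) =o[atTop] ε :=
      rpow_isLittleO hν0 hε0 hνO hεlim (by linarith)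
    exact (((l1.const_mul_left (1/2)).add (l2.const_mul_left 16)).add
      (l3.const_mul_left (16*CA + 16))).add (l4.const_mul_left (K*CA + K*CB))
  have part1 : (fun N => (∫ ω, Real.log (M N ω) ∂ μ N) - (ε N - ν N / 2)) =o[atTop] ε := by
    refine IsBigO.trans_isLittleO ?_ hBndo
    rw [isBigO_iff]
    refine ⟨1, ?_⟩
    filter_upwards [hBnd] with N h
    rw [one_mul, Real.norm_eq_abs, Real.norm_eq_abs]
    exact h.trans (le_abs_self _)
  refine ⟨part1, ?_⟩
  intro ρ hρ hρlim
  have hsmall := isLittleO_iff.mp part1 (by linarith : (0:ℝ) < (ρ-2)/4)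
  have hρev : ∀ᶠ N in atTop, ρ - (ρ-2)/4 < ν N / ε N :=
    hρlim.eventually (eventually_gt_nhds (by linarith))
  filter_upwards [hsmall, hρev] with N h1 h2
  have hεpos : 0 < ε N := by
    rcases (hε0 N).eq_or_lt with he | he
    · exfalso
      rw [← he, div_zero] at h2
      linarith
    · exact he
  rw [Real.norm_eq_abs, Real.norm_eq_abs, abs_of_nonneg (hε0 N)] at h1
  have h3 : (ρ - (ρ-2)/4) * ε N ≤ ν N := by
    have := mul_le_mul_of_nonneg_right h2.le (le_of_lt hεpos)
    rwa [div_mul_cancel₀ _ (ne_of_gt hεpos)] at this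
  have h4 := (abs_le.mp h1).2
  nlinarith [mul_pos (by linarith : (0:ℝ) < ρ - 2) hεpos]
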